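/- Let k be a field, n ≥ 2, λ₁,…,λₙ pairwise distinct nonzero elements of k, and X the 3-Kronecker representation (k^n, k^n; id, diag(λᵢ), cyclic shift γ). If W ≤ X (as a subrepresentation) has dimension vector (w, w) then W = 0 or W = X. -/

import Mathlib

/- Any subrepresentation W ≤ X with dimension vector (w,w) is 0 or X, for
   X = (k^n, k^n; id, diag(λᵢ), cyclic shift). -/

def kroneckerBeta (k : Type) [Field k] (n : ℕ) (l : Fin n → k) :
    (Fin n → k) →ₗ[k] (Fin n → k) where
  toFun v i := l i * v i
  map_add' u v := by funext i; simp [mul_add]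
  map_smul' c v := by funext i; simp; ring

def kroneckerGamma (k : Type) [Field k] (n : ℕ) :
    (Fin n → k) →ₗ[k] (Fin n → k) where
  toFun v i := v ((finRotate n).symm i)
  map_add' u v := rfl
  map_smul' c v := rfl

-- eigenvector extraction
lemma key (k : Type) [Field k] (n : ℕ) (l : Fin n → k) (hinj : Function.Injective l)
    (W : Submodule k (Fin n → k)) (hβ : ∀ x ∈ W, kroneckerBeta k n l x ∈ W)
    (s : Finset (Fin n)) :
    ∀ x ∈ W, (∀ j, x j ≠ 0 → j ∈ s) → ∀ i, x i ≠ 0 → Pi.single i (1:k) ∈ W := by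
  induction s using Finset.strongInduction with
  | _ s ih =>
    intro x hx hsupp i hi
    by_cases h : ∃ j, x j ≠ 0 ∧ j ≠ i
    · obtain ⟨j, hj, hji⟩ := h
      set y : Fin n → k := kroneckerBeta k n l x - l j • x with hy
      have hyW : y ∈ W := W.sub_mem (hβ x hx) (W.smul_mem _ hx)
      have hyv : ∀ m, y m = (l m - l j) * x m := by
        intro m; simp [hy, kroneckerBeta]; ring
      have hyj : y j = 0 := by simp [hyv]
      have hsub : s.erase j ⊂ s := Finset.erase_ssubset (hsupp j hj)
      refine ih _ hsub y hyW ?_ i ?_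
      · intro m hm
        have hxm : x m ≠ 0 := by
          intro h0; apply hm; simp [hyv, h0]
        have hmj : m ≠ j := by rintro rfl; exact hm hyj
        exact Finset.mem_erase.2 ⟨hmj, hsupp m hxm⟩
      · rw [hyv]
        exact mul_ne_zero (sub_ne_zero.2 fun he => hji (hinj he).symm) hi
    · push_neg at h
      have : Pi.single i (1:k) = (x i)⁻¹ • x := by
        funext j
        by_cases hji : j = i
        · subst hji; simp [inv_mul_cancel₀ hi]
        · have hxj : x j = 0 := by by_contra h0; exact hji (h j h0)
          simp [Pi.single_apply, hji, hxj]
      rw [this]; exact W.smul_mem _ hx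

lemma gamma_single (k : Type) [Field k] (n : ℕ) (i : Fin n) :
    kroneckerGamma k n (Pi.single i (1:k)) = Pi.single (finRotate n i) (1:k) := by
  funext j
  simp only [kroneckerGamma, LinearMap.coe_mk, AddHom.coe_mk, Pi.single_apply]
  simp only [Equiv.symm_apply_eq]

open Fin.NatCast in
theorem stmt8 (k : Type) [Field k] (n : ℕ) (hn : 2 ≤ n) (l : Fin n → k)
    (hne : ∀ i, l i ≠ 0) (hinj : Function.Injective l)
    (W₁ W₂ : Submodule k (Fin n → k)) (w : ℕ)
    (hα : ∀ x ∈ W₁, (LinearMap.id : (Fin n → k) →ₗ[k] (Fin n → k)) x ∈ W₂)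
    (hβ : ∀ x ∈ W₁, kroneckerBeta k n l x ∈ W₂)
    (hγ : ∀ x ∈ W₁, kroneckerGamma k n x ∈ W₂)
    (hd1 : Module.finrank k W₁ = w) (hd2 : Module.finrank k W₂ = w) :
    (W₁ = ⊥ ∧ W₂ = ⊥) ∨ (W₁ = ⊤ ∧ W₂ = ⊤) := by
  have hle : W₁ ≤ W₂ := fun x hx => hα x hx
  have heq : W₁ = W₂ := Submodule.eq_of_le_of_finrank_eq hle (hd1.trans hd2.symm)
  subst heq
  by_cases hbot : W₁ = ⊥
  · left; exact ⟨hbot, hbot⟩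
  · right
    obtain ⟨x, hx, hx0⟩ := Submodule.exists_mem_ne_zero_of_ne_bot hbot
    obtain ⟨i, hi⟩ : ∃ i, x i ≠ 0 := by
      by_contra h; push_neg at h; exact hx0 (funext h)
    have hsingle : Pi.single i (1:k) ∈ W₁ :=
      key k n l hinj W₁ hβ Finset.univ x hx (fun _ _ => Finset.mem_univ _) i hi
    -- all singles via rotation
    obtain ⟨m, rfl⟩ : ∃ m, n = m + 1 := ⟨n - 1, by omega⟩
    have hiter : ∀ t : ℕ, Pi.single (i + (t : Fin (m+1))) (1:k) ∈ W₁ := by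
      intro t
      induction t with
      | zero => simpa using hsingle
      | succ t iht =>
        have := hγ _ iht
        rw [gamma_single] at this
        rw [finRotate_succ_apply] at this
        have hc : i + ((t+1:ℕ) : Fin (m+1)) = i + ↑t + 1 := by push_cast; exact (add_assoc _ _ _).symm
        rwa [hc]
    have hall : ∀ j : Fin (m+1), Pi.single j (1:k) ∈ W₁ := by
      intro j
      have := hiter (j - i).val
      rwa [Fin.cast_val_eq_self, add_sub_cancel] at this
    have htop : W₁ = ⊤ := by
      rw [Submodule.eq_top_iff']
      intro v
      have : v = ∑ j : Fin (m+1), v j • (Pi.single j 1 : Fin (m+1) → k) := by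
        funext j'
        rw [Finset.sum_apply]
        simp [Pi.single_apply]
      rw [this]
      exact Submodule.sum_mem _ fun j _ => W₁.smul_mem _ (hall j)
    exact ⟨htop, htop⟩
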